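/- Let κ be a cardinal with κ < 𝔤𝔢(Laver) := min{𝔤𝔢(I_f) : f ∈ H}. Then for every h : ℕ → ℕ \ {0} and every family 𝒟 ⊆ ∏_{n∈ℕ} h(n) of cardinality κ, there exists u ∈ ∏_{n∈ℕ} h(n) such that for every x ∈ 𝒟 the set {n ∈ ℕ : u(n) = x(n)} is infinite. Consequently 𝔤𝔢(Laver) ≤ non(𝒮𝒩). -/

import Mathlib

/-- `ℚ ⊆ 2^ω`: the set of eventually-zero binary sequences. -/
def QSet : Set (ℕ → Bool) := {x | ∀ᶠ n in Filter.atTop, x n = false}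

/-- `level A n` is the number of distinct restrictions to `n` of elements of `A ⊆ 2^ω`. -/
noncomputable def level (A : Set (ℕ → Bool)) (n : ℕ) : ℕ :=
  ((fun x : ℕ → Bool => (fun i : Fin n => x i)) '' A).ncard

/-- The class `H` of non-decreasing, unbounded `f : ℕ → ℕ` with `f n ≤ n`. -/
def memH (f : ℕ → ℕ) : Prop :=
  Monotone f ∧ (∀ m : ℕ, ∃ n, m ≤ f n) ∧ ∀ n, f n ≤ n

/-- The ideal `I_f`, viewed as an ideal on the countable set `ℚ ⊆ 2^ω`. -/
def idealIQ (f : ℕ → ℕ) : Set (Set (ℕ → Bool)) :=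
  {A | A ⊆ QSet ∧ ∀ d : ℕ, 1 ≤ d → ∀ᶠ n in Filter.atTop, d * level A n ≤ f n}

/-- A filter base of subsets of `ℚ`. -/
def IsFilterBaseQ (F : Set (Set (ℕ → Bool))) : Prop :=
  F.Nonempty ∧ (∀ A ∈ F, A ⊆ QSet) ∧ ∀ A ∈ F, ∀ B ∈ F, ∃ C ∈ F, C ⊆ A ∩ B

/-- The generic existence number `𝔤𝔢(I_f)`. -/
noncomputable def geI (f : ℕ → ℕ) : Cardinal :=
  sInf {c : Cardinal | ∃ F : Set (Set (ℕ → Bool)), IsFilterBaseQ F ∧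
    (∀ A ∈ F, A ∉ idealIQ f) ∧ (∀ I ∈ idealIQ f, ∃ A ∈ F, (I ∩ A).Finite) ∧
    Cardinal.mk F = c}

/-- `𝔤𝔢(Laver) := min {𝔤𝔢(I_f) : f ∈ H}`. -/
noncomputable def geLaver : Cardinal :=
  sInf {c : Cardinal | ∃ f : ℕ → ℕ, memH f ∧ geI f = c}

/-- The basic clopen set `[s]` of branches through the finite binary sequence `s`. -/
def cylinder (s : List Bool) : Set (ℕ → Bool) :=
  {x | ∀ i : Fin s.length, x i = s.get i}

/-- `X ⊆ 2^ω` has strong measure zero. -/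
def HasSMZ (X : Set (ℕ → Bool)) : Prop :=
  ∀ g : ℕ → ℕ, ∃ σ : ℕ → List Bool, (∀ n, (σ n).length = g n) ∧ X ⊆ ⋃ n, cylinder (σ n)

/-- `non(𝒮𝒩)`: the least cardinality of a subset of `2^ω` without strong measure zero. -/
noncomputable def nonSN : Cardinal :=
  sInf {c : Cardinal | ∃ X : Set (ℕ → Bool), ¬ HasSMZ X ∧ Cardinal.mk X = c}

namespace Stmt16

/-! ### helpers -/

lemma infinite_of_unbounded (s : Set ℕ) (h : ∀ N, ∃ n, N ≤ n ∧ n ∈ s) : s.Infinite := by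
  intro hfin
  obtain ⟨B, hB⟩ := hfin.bddAbove
  obtain ⟨n, hn, hns⟩ := h (B + 1)
  exact absurd (hB hns) (by omega)

lemma exists_ge_of_infinite (s : Set ℕ) (hs : s.Infinite) (N : ℕ) : ∃ n ∈ s, N ≤ n := by
  by_contra hcon
  push_neg at hcon
  exact hs (Set.Finite.subset (Set.finite_lt_nat N) (fun n hn => hcon n hn))

/-! ### block structure for the coding into `2^ω` -/

/-- Block starts: block `m` is `[blk m, blk (m+1))`, of length `h m + 1`. -/
def blk (h : ℕ → ℕ) : ℕ → ℕ
  | 0 => 0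
  | m + 1 => blk h m + (h m + 1)

lemma blk_succ (h : ℕ → ℕ) (m : ℕ) : blk h (m + 1) = blk h m + (h m + 1) := rfl

lemma blk_lt_succ (h : ℕ → ℕ) (m : ℕ) : blk h m < blk h (m + 1) := by
  rw [blk_succ]; omega

lemma blk_strictMono (h : ℕ → ℕ) : StrictMono (blk h) :=
  strictMono_nat_of_lt_succ (blk_lt_succ h)

lemma self_le_blk (h : ℕ → ℕ) (m : ℕ) : m ≤ blk h m := by
  induction m with
  | zero => exact Nat.zero_le _
  | succ k ih => have := blk_lt_succ h k; omega

/-- The element of `ℚ` which copies `t` below `blk m`, has a `true` marker at `blk m`,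
codes the finite set `S` in the rest of block `m`, and is `false` afterwards. -/
def zfun (h : ℕ → ℕ) (S : Finset ℕ) (m : ℕ) (t : ℕ → Bool) : ℕ → Bool :=
  fun n =>
    if n < blk h m then t n
    else if n = blk h m then true
    else if n < blk h (m + 1) then decide ((n - (blk h m + 1)) ∈ S)
    else false

lemma zfun_mem_QSet (h : ℕ → ℕ) (S : Finset ℕ) (m : ℕ) (t : ℕ → Bool) :
    zfun h S m t ∈ QSet := by
  refine Filter.eventually_atTop.2 ⟨blk h (m+1), fun n hn => ?_⟩
  have h1 := self_le_blk h m
  have h2 := blk_lt_succ h m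
  simp only [zfun]
  rw [if_neg (by omega), if_neg (by omega), if_neg (by omega)]

/-- The positive sets: `AA E` consists of all `zfun S m t` where the block-`m` code `S`
contains all values `x m`, `x ∈ E`. -/
def AA (h : ℕ → ℕ) (E : Finset (ℕ → ℕ)) : Set (ℕ → Bool) :=
  { z | ∃ m, E.card ≤ m ∧ ∃ S : Finset ℕ, (E.image fun x => x m) ⊆ S ∧
      S ⊆ Finset.range (h m) ∧ S.card ≤ m ∧ ∃ t, z = zfun h S m t }

lemma AA_subset_QSet (h : ℕ → ℕ) (E : Finset (ℕ → ℕ)) : AA h E ⊆ QSet := by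
  rintro z ⟨m, -, S, -, -, -, t, rfl⟩
  exact zfun_mem_QSet h S m t

lemma AA_antitone (h : ℕ → ℕ) {E E' : Finset (ℕ → ℕ)} (hEE : E ⊆ E') : AA h E' ⊆ AA h E := by
  rintro z ⟨m, hm, S, hS1, hS2, hS3, t, rfl⟩
  exact ⟨m, le_trans (Finset.card_le_card hEE) hm, S,
    le_trans (Finset.image_subset_image hEE) hS1, hS2, hS3, t, rfl⟩

/-- The level of `AA E` is maximal. -/
lemma level_AA (h : ℕ → ℕ) (E : Finset (ℕ → ℕ)) (hE : ∀ x ∈ E, ∀ k, x k < h k) (n : ℕ) :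
    level (AA h E) n = 2 ^ n := by
  have himg : ((fun x : ℕ → Bool => (fun i : Fin n => x i)) '' (AA h E)) = Set.univ := by
    refine Set.eq_univ_of_forall fun s => ?_
    set m := max E.card n with hm
    set t : ℕ → Bool := fun i => if hi : i < n then s ⟨i, hi⟩ else false with ht
    set S : Finset ℕ := E.image fun x => x m with hSdef
    have hzt : zfun h S m t ∈ AA h E := by
      refine ⟨m, le_max_left _ _, S, le_refl _, ?_, ?_, t, rfl⟩
      · intro j hj
        simp only [hSdef, Finset.mem_image] at hj
        obtain ⟨x, hx, rfl⟩ := hj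
        exact Finset.mem_range.2 (hE x hx m)
      · exact le_trans (Finset.card_image_le) (le_max_left _ _)
    refine ⟨zfun h S m t, hzt, ?_⟩
    funext i
    have hin : (i : ℕ) < blk h m :=
      lt_of_lt_of_le i.2 (le_trans (le_max_right _ _) (self_le_blk h m))
    simp only [zfun, if_pos hin, ht]
    rw [dif_pos i.2]
  rw [level, himg, Set.ncard_univ, Nat.card_eq_fintype_card]
  simp [Fintype.card_fun]

lemma AA_not_mem_ideal (h : ℕ → ℕ) (E : Finset (ℕ → ℕ)) (hE : ∀ x ∈ E, ∀ k, x k < h k)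
    (f : ℕ → ℕ) (hf : ∀ n, f n ≤ n) : AA h E ∉ idealIQ f := by
  intro hmem
  obtain ⟨N, hN⟩ := Filter.eventually_atTop.1 (hmem.2 1 le_rfl)
  have h1 := hN N le_rfl
  rw [one_mul, level_AA h E hE] at h1
  exact absurd (le_trans h1 (hf N)) (not_le.2 (Nat.lt_two_pow_self (n := N)))

/-! ### the function `f ∈ H` associated to the blocks -/

/-- `ff n` = number of complete blocks contained in `[0,n)`. -/
def ff (h : ℕ → ℕ) (n : ℕ) : ℕ := ((Finset.range n).filter fun m => blk h (m + 1) ≤ n).card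

lemma memH_ff (h : ℕ → ℕ) : memH (ff h) := by
  refine ⟨fun n n' hnn => Finset.card_le_card ?_, fun M => ⟨blk h (M + 1), ?_⟩, fun n => ?_⟩
  · intro m hm
    simp only [Finset.mem_filter, Finset.mem_range] at hm ⊢
    omega
  · have hsub : Finset.range M ⊆
        (Finset.range (blk h (M+1))).filter fun m => blk h (m + 1) ≤ blk h (M+1) := by
      intro m hm
      simp only [Finset.mem_range] at hm
      simp only [Finset.mem_filter, Finset.mem_range]
      have h1 : m + 1 ≤ M + 1 := by omega
      have h2 : blk h (m+1) ≤ blk h (M+1) := (blk_strictMono h).monotone h1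
      have h3 := self_le_blk h (M+1)
      omega
    calc M = (Finset.range M).card := (Finset.card_range M).symm
      _ ≤ _ := Finset.card_le_card hsub
  · exact le_trans (Finset.card_le_card (Finset.filter_subset _ _)) (le_of_eq (Finset.card_range n))

lemma ff_blk_succ (h : ℕ → ℕ) (m : ℕ) : ff h (blk h (m + 1)) = m + 1 := by
  have heq : ((Finset.range (blk h (m+1))).filter fun m' => blk h (m' + 1) ≤ blk h (m+1))
      = Finset.range (m + 1) := by
    ext m'
    simp only [Finset.mem_filter, Finset.mem_range]
    constructor
    · rintro ⟨-, hle⟩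
      have := ((blk_strictMono h).le_iff_le).1 hle
      omega
    · intro hm'
      have h1 : blk h (m'+1) ≤ blk h (m+1) := (blk_strictMono h).monotone (by omega)
      have h2 := self_le_blk h (m+1)
      omega
  rw [ff, heq, Finset.card_range]

/-! ### shaped elements, decoding -/

def shaped (h : ℕ → ℕ) (m : ℕ) (z : ℕ → Bool) : Prop :=
  z (blk h m) = true ∧ ∀ n, blk h (m + 1) ≤ n → z n = false

def dec (h : ℕ → ℕ) (m : ℕ) (z : ℕ → Bool) : Finset ℕ :=
  (Finset.range (h m)).filter fun j => z (blk h m + 1 + j) = true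

lemma zfun_shaped (h : ℕ → ℕ) (S : Finset ℕ) (m : ℕ) (t : ℕ → Bool) :
    shaped h m (zfun h S m t) := by
  constructor
  · simp [zfun]
  · intro n hn
    have h2 := blk_lt_succ h m
    simp only [zfun]
    rw [if_neg (by omega), if_neg (by omega), if_neg (by omega)]

lemma dec_zfun (h : ℕ → ℕ) (S : Finset ℕ) (m : ℕ) (t : ℕ → Bool)
    (hS : S ⊆ Finset.range (h m)) : dec h m (zfun h S m t) = S := by
  have hblk : blk h (m+1) = blk h m + (h m + 1) := rfl
  ext j
  simp only [dec, Finset.mem_filter, Finset.mem_range]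
  constructor
  · rintro ⟨hj, hz⟩
    simp only [zfun] at hz
    rw [if_neg (by omega), if_neg (by omega), if_pos (by omega)] at hz
    have heq : blk h m + 1 + j - (blk h m + 1) = j := by omega
    rw [heq] at hz
    exact of_decide_eq_true hz
  · intro hj
    have hjr := Finset.mem_range.1 (hS hj)
    refine ⟨hjr, ?_⟩
    simp only [zfun]
    rw [if_neg (by omega), if_neg (by omega), if_pos (by omega)]
    have heq : blk h m + 1 + j - (blk h m + 1) = j := by omega
    rw [heq]
    exact decide_eq_true hj

/-- the set of elements of `I` shaped like block `m`. -/
def Zm (h : ℕ → ℕ) (I : Set (ℕ → Bool)) (m : ℕ) : Set (ℕ → Bool) := {z ∈ I | shaped h m z}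

lemma res_injOn_Zm (h : ℕ → ℕ) (I : Set (ℕ → Bool)) (m : ℕ) :
    Set.InjOn (fun x : ℕ → Bool => (fun i : Fin (blk h (m+1)) => x i)) (Zm h I m) := by
  rintro z ⟨-, hz⟩ z' ⟨-, hz'⟩ hres
  funext n
  by_cases hn : n < blk h (m + 1)
  · exact congrFun hres ⟨n, hn⟩
  · rw [hz.2 n (by omega), hz'.2 n (by omega)]

lemma Zm_finite (h : ℕ → ℕ) (I : Set (ℕ → Bool)) (m : ℕ) : (Zm h I m).Finite := by
  have himg : ((fun x : ℕ → Bool => (fun i : Fin (blk h (m+1)) => x i)) '' (Zm h I m)).Finite :=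
    Set.Finite.subset Set.finite_univ (Set.subset_univ _)
  exact Set.Finite.of_finite_image himg (res_injOn_Zm h I m)

lemma Zm_ncard_le (h : ℕ → ℕ) (I : Set (ℕ → Bool)) (m : ℕ) :
    (Zm h I m).ncard ≤ level I (blk h (m + 1)) := by
  rw [← Set.ncard_image_of_injOn (res_injOn_Zm h I m)]
  refine Set.ncard_le_ncard (Set.image_mono (fun z hz => hz.1)) ?_
  exact Set.Finite.subset Set.finite_univ (Set.subset_univ _)

/-- The slalom extracted from `I`. -/
noncomputable def slalomRaw (h : ℕ → ℕ) (I : Set (ℕ → Bool)) (m : ℕ) : Finset ℕ :=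
  (Zm_finite h I m).toFinset.biUnion
    (fun z => if (dec h m z).card ≤ m then dec h m z else ∅)

noncomputable def slalomOf (h : ℕ → ℕ) (I : Set (ℕ → Bool)) (m : ℕ) : Finset ℕ :=
  if (slalomRaw h I m).card ≤ (m + 1) ^ 2 then slalomRaw h I m else ∅

lemma slalomOf_card (h : ℕ → ℕ) (I : Set (ℕ → Bool)) (m : ℕ) :
    (slalomOf h I m).card ≤ (m + 1) ^ 2 := by
  rw [slalomOf]
  split
  · assumption
  · simp

lemma slalomOf_spec (h : ℕ → ℕ) (I : Set (ℕ → Bool)) (m : ℕ)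
    (hcard : (Zm h I m).ncard ≤ m + 1)
    (S : Finset ℕ) (t : ℕ → Bool) (hS : S ⊆ Finset.range (h m)) (hSc : S.card ≤ m)
    (hzI : zfun h S m t ∈ I) (j : ℕ) (hj : j ∈ S) : j ∈ slalomOf h I m := by
  have hzZ : zfun h S m t ∈ Zm h I m := ⟨hzI, zfun_shaped h S m t⟩
  have hmemraw : j ∈ slalomRaw h I m := by
    refine Finset.mem_biUnion.2 ⟨zfun h S m t, ?_, ?_⟩
    · exact (Set.Finite.mem_toFinset _).2 hzZ
    · rw [dec_zfun h S m t hS, if_pos hSc]; exact hj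
  have hrawcard : (slalomRaw h I m).card ≤ (m + 1) ^ 2 := by
    have h1 : (slalomRaw h I m).card ≤ ∑ z ∈ (Zm_finite h I m).toFinset,
        (if (dec h m z).card ≤ m then dec h m z else ∅).card := Finset.card_biUnion_le
    have h2 : ∀ z ∈ (Zm_finite h I m).toFinset,
        (if (dec h m z).card ≤ m then dec h m z else ∅).card ≤ m := by
      intro z _
      split
      · assumption
      · simp
    have h3 := Finset.sum_le_card_nsmul _ _ m h2
    have h4 : (Zm_finite h I m).toFinset.card = (Zm h I m).ncard :=
      (Set.ncard_eq_toFinset_card _ (Zm_finite h I m)).symm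
    have h5 : (slalomRaw h I m).card ≤ (m + 1) * m := by
      calc (slalomRaw h I m).card ≤ _ := h1
        _ ≤ (Zm_finite h I m).toFinset.card • m := h3
        _ = (Zm h I m).ncard * m := by rw [smul_eq_mul, h4]
        _ ≤ (m + 1) * m := Nat.mul_le_mul_right m hcard
    nlinarith
  rw [slalomOf, if_pos hrawcard]
  exact hmemraw

/-! ### the main slalom lemma -/

lemma slalom_lemma (h : ℕ → ℕ) (κ : Cardinal) (hκ : κ < geLaver)
    (hκinf : Cardinal.aleph0 ≤ κ)
    (D : Set (ℕ → ℕ)) (hD : ∀ x ∈ D, ∀ n, x n < h n)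
    (hmk : Cardinal.mk D ≤ κ) :
    ∃ S : ℕ → Finset ℕ, (∀ m, (S m).card ≤ (m + 1) ^ 2) ∧
      ∀ x ∈ D, {m | x m ∈ S m}.Infinite := by
  classical
  set F : Set (Set (ℕ → Bool)) :=
    Set.range (fun G : Finset ↥D => AA h (G.image Subtype.val)) with hF
  have hval : ∀ G : Finset ↥D, ∀ x ∈ G.image Subtype.val, ∀ k, x k < h k := by
    intro G x hx k
    obtain ⟨p, -, rfl⟩ := Finset.mem_image.1 hx
    exact hD p.1 p.2 k
  have hgeLaver_le : geLaver ≤ geI (ff h) := csInf_le' ⟨ff h, memH_ff h, rfl⟩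
  have hI : ∃ I ∈ idealIQ (ff h), ∀ A ∈ F, (I ∩ A).Infinite := by
    by_contra hcon
    push_neg at hcon
    have hworks : ∀ I ∈ idealIQ (ff h), ∃ A ∈ F, (I ∩ A).Finite := by
      intro I hI'
      obtain ⟨A, hA, hfin⟩ := hcon I hI'
      exact ⟨A, hA, hfin⟩
    have hbase : IsFilterBaseQ F := by
      refine ⟨⟨AA h (Finset.image Subtype.val ∅), ⟨∅, rfl⟩⟩, ?_, ?_⟩
      · rintro A ⟨G, rfl⟩
        exact AA_subset_QSet h _
      · rintro A ⟨G, rfl⟩ B ⟨G', rfl⟩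
        refine ⟨AA h ((G ∪ G').image Subtype.val), ⟨G ∪ G', rfl⟩,
          Set.subset_inter ?_ ?_⟩
        · exact AA_antitone h (Finset.image_subset_image
            (Finset.subset_union_left : G ⊆ G ∪ G'))
        · exact AA_antitone h (Finset.image_subset_image
            (Finset.subset_union_right : G' ⊆ G ∪ G'))
    have hpos : ∀ A ∈ F, A ∉ idealIQ (ff h) := by
      rintro A ⟨G, rfl⟩
      exact AA_not_mem_ideal h _ (hval G) (ff h) (memH_ff h).2.2
    have hmemS : Cardinal.mk F ∈ {c : Cardinal | ∃ F' : Set (Set (ℕ → Bool)),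
        IsFilterBaseQ F' ∧ (∀ A ∈ F', A ∉ idealIQ (ff h)) ∧
        (∀ I ∈ idealIQ (ff h), ∃ A ∈ F', (I ∩ A).Finite) ∧ Cardinal.mk F' = c} :=
      ⟨F, hbase, hpos, hworks, rfl⟩
    have hgeI_le : geI (ff h) ≤ Cardinal.mk F := csInf_le' hmemS
    have hFκ : Cardinal.mk F ≤ κ := by
      have h1 : Cardinal.mk F ≤ Cardinal.mk (Finset ↥D) := Cardinal.mk_range_le
      rcases finite_or_infinite ↥D with hfin | hinf
      · haveI := hfin
        haveI := Fintype.ofFinite ↥D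
        exact le_trans h1 (le_trans (le_of_lt (Cardinal.lt_aleph0_of_finite _)) hκinf)
      · haveI := hinf
        rw [Cardinal.mk_finset_of_infinite] at h1
        exact le_trans h1 hmk
    exact absurd hκ (not_lt.2 (le_trans hgeLaver_le (le_trans hgeI_le hFκ)))
  obtain ⟨I, hImem, hIinf⟩ := hI
  obtain ⟨N, hN⟩ := Filter.eventually_atTop.1 (hImem.2 1 le_rfl)
  refine ⟨slalomOf h I, slalomOf_card h I, ?_⟩
  intro x hx
  set M : Set ℕ := {m | ∃ S : Finset ℕ, ∃ t, x m ∈ S ∧ S ⊆ Finset.range (h m) ∧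
      S.card ≤ m ∧ zfun h S m t ∈ I} with hM
  have hMinf : M.Infinite := by
    intro hMfin
    have hA : AA h (({⟨x, hx⟩} : Finset ↥D).image Subtype.val) ∈ F := by rw [hF]; exact Set.mem_range_self _
    refine hIinf _ hA ?_
    have hsub : I ∩ AA h (({⟨x, hx⟩} : Finset ↥D).image Subtype.val) ⊆
        ⋃ m ∈ M, Zm h I m := by
      rintro z ⟨hzI, m, hm1, S, hS1, hS2, hS3, t, rfl⟩
      have hxm : x m ∈ S := by
        apply hS1
        refine Finset.mem_image.2 ⟨x, ?_, rfl⟩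
        exact Finset.mem_image.2 ⟨⟨x, hx⟩, Finset.mem_singleton_self _, rfl⟩
      have hmM : m ∈ M := ⟨S, t, hxm, hS2, hS3, hzI⟩
      exact Set.mem_biUnion hmM ⟨hzI, zfun_shaped h S m t⟩
    exact Set.Finite.subset (Set.Finite.biUnion hMfin (fun m _ => Zm_finite h I m)) hsub
  apply infinite_of_unbounded
  intro N'
  obtain ⟨m, hmM, hmge⟩ := exists_ge_of_infinite M hMinf (max N N')
  obtain ⟨S, t, hxS, hSr, hSc, hzI⟩ := hmM
  have hcard : (Zm h I m).ncard ≤ m + 1 := by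
    have h1 : N ≤ blk h (m + 1) := by
      have h2 := self_le_blk h (m + 1)
      have h3 : N ≤ max N N' := le_max_left _ _
      omega
    have h2 := hN (blk h (m + 1)) h1
    rw [one_mul, ff_blk_succ h m] at h2
    exact le_trans (Zm_ncard_le h I m) h2
  refine ⟨m, le_trans (le_max_right _ _) hmge, ?_⟩
  exact slalomOf_spec h I m hcard S t hSr hSc hzI (x m) hxS

/-! ### reduction from slalom capture to infinitely-equal -/

def W (k : ℕ) : ℕ := (k + 1) ^ 2

def bb : ℕ → ℕ
  | 0 => 0
  | k + 1 => bb k + W k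

lemma bb_succ (k : ℕ) : bb (k + 1) = bb k + W k := rfl

lemma bb_lt_succ (k : ℕ) : bb k < bb (k + 1) := by
  have hW : 0 < W k := by rw [W]; positivity
  rw [bb_succ]; omega

lemma bb_strictMono : StrictMono bb := strictMono_nat_of_lt_succ bb_lt_succ

lemma self_le_bb (k : ℕ) : k ≤ bb k := by
  induction k with
  | zero => exact le_refl 0
  | succ n ih => have := bb_lt_succ n; omega

/-- which block a coordinate lies in -/
def bOf (n : ℕ) : ℕ := Nat.findGreatest (fun k => bb k ≤ n) n

lemma bOf_eq (k j : ℕ) (hj : j < W k) : bOf (bb k + j) = k := by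
  have hkn : k ≤ bb k + j := le_trans (self_le_bb k) (by omega)
  have hPk : bb k ≤ bb k + j := by omega
  have hle : k ≤ bOf (bb k + j) := Nat.le_findGreatest hkn hPk
  have hspec : bb (bOf (bb k + j)) ≤ bb k + j :=
    Nat.findGreatest_spec (P := fun k' => bb k' ≤ bb k + j) hkn hPk
  by_contra hcon
  have hlt : k < bOf (bb k + j) := lt_of_le_of_ne hle (fun hcc => hcon hcc.symm)
  have h1 : bb (k + 1) ≤ bb (bOf (bb k + j)) := bb_strictMono.monotone hlt
  rw [bb_succ] at h1
  omega

/-- code of the `k`-th block of values of `x` -/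
def codeX (x : ℕ → ℕ) (k : ℕ) : ℕ :=
  Encodable.encode (List.ofFn (fun j : Fin (W k) => x (bb k + j)))

noncomputable def Hmax (h : ℕ → ℕ) (k : ℕ) : ℕ :=
  (Finset.range (W k)).sup fun j => h (bb k + j)

noncomputable def h' (h : ℕ → ℕ) (k : ℕ) : ℕ :=
  ((Finset.univ : Finset (Fin (W k) → Fin (Hmax h k))).image
    (fun v => Encodable.encode (List.ofFn (fun j => (v j : ℕ))))).sup id + 1

lemma codeX_lt (h : ℕ → ℕ) (x : ℕ → ℕ) (k : ℕ) (hx : ∀ n, x n < h n) :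
    codeX x k < h' h k := by
  have hv : ∀ j : Fin (W k), x (bb k + j) < Hmax h k := by
    intro j
    have hmr : Hmax h k = (Finset.range (W k)).sup fun j' => h (bb k + j') := rfl
    have : h (bb k + (j : ℕ)) ≤ Hmax h k := by
      rw [hmr]
      exact Finset.le_sup (f := fun j' => h (bb k + j')) (Finset.mem_range.2 j.2)
    exact lt_of_lt_of_le (hx _) this
  set v : Fin (W k) → Fin (Hmax h k) := fun j => ⟨x (bb k + j), hv j⟩ with hvdef
  have heq : codeX x k = Encodable.encode (List.ofFn (fun j => (v j : ℕ))) := by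
    simp [codeX, hvdef]
  have hmem : codeX x k ∈ (Finset.univ : Finset (Fin (W k) → Fin (Hmax h k))).image
      (fun v => Encodable.encode (List.ofFn (fun j => (v j : ℕ)))) := by
    rw [heq]
    exact Finset.mem_image.2 ⟨v, Finset.mem_univ v, rfl⟩
  have hsup : (codeX x k : ℕ) ≤ ((Finset.univ : Finset (Fin (W k) → Fin (Hmax h k))).image
      (fun v => Encodable.encode (List.ofFn (fun j => (v j : ℕ))))).sup id :=
    Finset.le_sup (f := (id : ℕ → ℕ)) hmem
  have hh' : h' h k = ((Finset.univ : Finset (Fin (W k) → Fin (Hmax h k))).image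
      (fun v => Encodable.encode (List.ofFn (fun j => (v j : ℕ))))).sup id + 1 := rfl
  rw [hh']
  exact Nat.lt_succ_of_le hsup

lemma infEq (h : ℕ → ℕ) (κ : Cardinal) (hκ : κ < geLaver) (hκinf : Cardinal.aleph0 ≤ κ)
    (hpos : ∀ n, 0 < h n)
    (D : Set (ℕ → ℕ)) (hD : ∀ x ∈ D, ∀ n, x n < h n) (hmk : Cardinal.mk D ≤ κ) :
    ∃ u : ℕ → ℕ, (∀ n, u n < h n) ∧ ∀ x ∈ D, {n | u n = x n}.Infinite := by
  classical
  set D' : Set (ℕ → ℕ) := (fun x => codeX x) '' D with hD'def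
  have hD' : ∀ y ∈ D', ∀ k, y k < h' h k := by
    rintro y ⟨x, hx, rfl⟩ k
    exact codeX_lt h x k (hD x hx)
  have hmk' : Cardinal.mk D' ≤ κ := le_trans Cardinal.mk_image_le hmk
  obtain ⟨S, hScard, hScap⟩ := slalom_lemma (h' h) κ hκ hκinf D' hD' hmk'
  refine ⟨fun n =>
    min ((Denumerable.ofNat (List ℕ)
      (((S (bOf n)).sort (· ≤ ·)).getD (n - bb (bOf n)) 0)).getD (n - bb (bOf n)) 0)
      (h n - 1),
    fun n => lt_of_le_of_lt (min_le_right _ _) (by have := hpos n; omega), ?_⟩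
  intro x hx
  have hx' : codeX x ∈ D' := ⟨x, hx, rfl⟩
  have hcap := hScap _ hx'
  apply infinite_of_unbounded
  intro N'
  obtain ⟨k, hkS, hkge⟩ := exists_ge_of_infinite _ hcap N'
  have hmemsort : codeX x k ∈ (S k).sort (· ≤ ·) := (Finset.mem_sort _).2 hkS
  obtain ⟨i, hilt, hi⟩ := List.mem_iff_getElem.1 hmemsort
  have hilt' : i < (S k).card := by
    have h2 := hilt
    rwa [Finset.length_sort] at h2
  have hilen : i < W k := by
    have h3 := hScard k
    simp only [W]
    omega
  refine ⟨bb k + i, by have := self_le_bb k; omega, ?_⟩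
  have hbof : bOf (bb k + i) = k := bOf_eq k i hilen
  have hsub : bb k + i - bb (bOf (bb k + i)) = i := by rw [hbof]; omega
  have hgetD : ((S (bOf (bb k + i))).sort (· ≤ ·)).getD (bb k + i - bb (bOf (bb k + i))) 0
      = codeX x k := by
    rw [hsub, hbof, List.getD_eq_getElem _ _ hilt]
    exact hi
  have hdecode : Denumerable.ofNat (List ℕ) (codeX x k)
      = List.ofFn (fun j : Fin (W k) => x (bb k + j)) := by
    simp [codeX, Denumerable.ofNat_encode]
  have hlistlen : (List.ofFn (fun j : Fin (W k) => x (bb k + j))).length = W k :=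
    List.length_ofFn
  have hgetD2 : (List.ofFn (fun j : Fin (W k) => x (bb k + j))).getD
      (bb k + i - bb (bOf (bb k + i))) 0 = x (bb k + i) := by
    rw [hsub, List.getD_eq_getElem _ _ (by rw [hlistlen]; exact hilen)]
    rw [List.getElem_ofFn]
  show min ((Denumerable.ofNat (List ℕ)
      (((S (bOf (bb k + i))).sort (· ≤ ·)).getD (bb k + i - bb (bOf (bb k + i))) 0)).getD
      (bb k + i - bb (bOf (bb k + i))) 0) (h (bb k + i) - 1) = x (bb k + i)
  rw [hgetD, hdecode, hgetD2]
  have := hD x hx (bb k + i)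
  omega

end Stmt16

theorem stmt_16 :
    (∀ κ : Cardinal, κ < geLaver →
      ∀ h : ℕ → ℕ, (∀ n, 0 < h n) →
        ∀ D : Set (ℕ → ℕ), (∀ x ∈ D, ∀ n, x n < h n) → Cardinal.mk D = κ →
          ∃ u : ℕ → ℕ, (∀ n, u n < h n) ∧ ∀ x ∈ D, {n | u n = x n}.Infinite) ∧
    geLaver ≤ nonSN := by
  classical
  have part1 : ∀ κ : Cardinal, κ < geLaver →
      ∀ h : ℕ → ℕ, (∀ n, 0 < h n) →
        ∀ D : Set (ℕ → ℕ), (∀ x ∈ D, ∀ n, x n < h n) → Cardinal.mk D = κ →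
          ∃ u : ℕ → ℕ, (∀ n, u n < h n) ∧ ∀ x ∈ D, {n | u n = x n}.Infinite := by
    intro κ hκ h hpos D hD hmkD
    rcases D.finite_or_infinite with hfin | hinf
    · -- finite case: cyclic diagonalization
      rcases D.eq_empty_or_nonempty with rfl | hne
      · exact ⟨fun n => 0, hpos, by simp⟩
      · set l : List (ℕ → ℕ) := hfin.toFinset.toList with hl
        have hlne : l ≠ [] := by
          simp only [hl, ne_eq, Finset.toList_eq_nil]
          intro hcon
          obtain ⟨y, hy⟩ := hne
          have hmem : y ∈ hfin.toFinset := hfin.mem_toFinset.2 hy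
          rw [hcon] at hmem
          simp at hmem
        have hk : 0 < l.length := List.length_pos_iff.2 hlne
        have humem : ∀ n, l.getD (n % l.length) (fun _ => 0) ∈ D := by
          intro n
          have hlt : n % l.length < l.length := Nat.mod_lt n hk
          rw [List.getD_eq_getElem _ _ hlt]
          have hmem : l[n % l.length] ∈ l := List.getElem_mem _
          exact hfin.mem_toFinset.1 (Finset.mem_toList.1 hmem)
        refine ⟨fun n => l.getD (n % l.length) (fun _ => 0) n,
          fun n => hD _ (humem n) n, ?_⟩
        intro x hx
        have hmem : x ∈ l := Finset.mem_toList.2 (hfin.mem_toFinset.2 hx)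
        obtain ⟨i, hilt, hi⟩ := List.mem_iff_getElem.1 hmem
        apply Stmt16.infinite_of_unbounded
        intro N
        refine ⟨i + N * l.length,
          by nlinarith [Nat.one_le_iff_ne_zero.2 (by omega : l.length ≠ 0)], ?_⟩
        have hmod : (i + N * l.length) % l.length = i := by
          rw [Nat.add_mul_mod_self_right]
          exact Nat.mod_eq_of_lt hilt
        show l.getD ((i + N * l.length) % l.length) (fun _ => 0) (i + N * l.length)
          = x (i + N * l.length)
        rw [hmod, List.getD_eq_getElem _ _ hilt, hi]
    · -- infinite case
      have hκinf : Cardinal.aleph0 ≤ κ := by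
        rw [← hmkD, Cardinal.aleph0_le_mk_iff]
        exact Set.infinite_coe_iff.2 hinf
      exact Stmt16.infEq h κ hκ hκinf hpos D hD (le_of_eq hmkD)
  refine ⟨part1, ?_⟩
  have hne : {c : Cardinal | ∃ X : Set (ℕ → Bool), ¬ HasSMZ X ∧ Cardinal.mk X = c}.Nonempty := by
    refine ⟨Cardinal.mk (Set.univ : Set (ℕ → Bool)), Set.univ, ?_, rfl⟩
    intro hsmz
    obtain ⟨σ, hlen, hcov⟩ := hsmz (fun n => n + 1)
    set x : ℕ → Bool := fun n => !((σ n).get ⟨n, by rw [hlen]; omega⟩) with hxdef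
    obtain ⟨_, ⟨n, rfl⟩, hn⟩ := hcov (Set.mem_univ x)
    have hcontra := hn ⟨n, by rw [hlen]; omega⟩
    simp only [hxdef] at hcontra
    exact Bool.not_ne_self _ hcontra
  refine le_csInf hne ?_
  rintro c ⟨X, hX, rfl⟩
  by_contra hlt
  push_neg at hlt
  apply hX
  intro g
  set h : ℕ → ℕ := fun n => 2 ^ g n with hh
  have hpos : ∀ n, 0 < h n := fun n => by positivity
  have e : ∀ n, (Fin (g n) → Bool) ≃ Fin (2 ^ g n) :=
    fun n => Fintype.equivFinOfCardEq (by simp)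
  set D : Set (ℕ → ℕ) :=
    (fun x : ℕ → Bool => fun n => ((e n) (fun i : Fin (g n) => x i) : ℕ)) '' X with hD
  have hDbd : ∀ y ∈ D, ∀ n, y n < h n := by
    rintro y ⟨x, hx, rfl⟩ n
    exact ((e n) _).2
  have hmkD : Cardinal.mk D < geLaver :=
    lt_of_le_of_lt Cardinal.mk_image_le hlt
  obtain ⟨u, hubd, hucap⟩ := part1 (Cardinal.mk D) hmkD h hpos D hDbd rfl
  refine ⟨fun n => List.ofFn (fun i : Fin (g n) => ((e n).symm ⟨u n, hubd n⟩) i),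
    fun n => List.length_ofFn, ?_⟩
  intro x hx
  have hxD : (fun n => ((e n) (fun i : Fin (g n) => x i) : ℕ)) ∈ D := ⟨x, hx, rfl⟩
  obtain ⟨n, hn⟩ := (hucap _ hxD).nonempty
  have hn' : u n = ((e n) (fun i : Fin (g n) => x i) : ℕ) := hn
  have hsymm : (e n).symm ⟨u n, hubd n⟩ = fun i : Fin (g n) => x i := by
    have heq : (⟨u n, hubd n⟩ : Fin (2 ^ g n)) = (e n) (fun i : Fin (g n) => x i) :=
      Fin.ext hn'
    rw [heq, Equiv.symm_apply_apply]
  refine Set.mem_iUnion.2 ⟨n, ?_⟩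
  intro i
  have h2 : (i : ℕ) < g n := by
    have h3 := i.2
    simpa using h3
  show x (i : ℕ) = _
  simp only [List.get_eq_getElem, List.getElem_ofFn]
  exact (congrFun hsymm ⟨(i : ℕ), h2⟩).symm
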